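/- Define F̄(S) = ‖B - P^{(S)} B‖_F² where B = AΩ. For any P ⊂ S with R = S \ P, F̄(S) = F̄(P) - ‖R^{(R)} F‖_F², where E = A - P^{(P)} A, F = B - P^{(P)} B, and R^{(R)} = E_{:R}(E_{:R}ᵀE_{:R})⁻¹E_{:R}ᵀ. -/
import Mathlib


open Matrix BigOperators

noncomputable section

/-- The submatrix of `A` consisting of the columns indexed by `S`. -/
def cols {m n : ℕ} (A : Matrix (Fin m) (Fin n) ℝ) (S : Finset (Fin n)) :
    Matrix (Fin m) {j // j ∈ S} ℝ :=
  Matrix.of fun i j => A i j.1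

/-- Orthogonal projection matrix onto the column span of `C`,
`C (Cᵀ C)⁻¹ Cᵀ`. -/
def projM {m : ℕ} {k : Type} [Fintype k] [DecidableEq k]
    (C : Matrix (Fin m) k ℝ) : Matrix (Fin m) (Fin m) ℝ :=
  C * (Cᵀ * C)⁻¹ * Cᵀ

/-- Squared Frobenius norm. -/
def frobSq {a b : Type} [Fintype a] [Fintype b] (A : Matrix a b ℝ) : ℝ :=
  ∑ i, ∑ j, (A i j) ^ 2

lemma cols_mul {m n : ℕ} (M : Matrix (Fin m) (Fin m) ℝ) (A : Matrix (Fin m) (Fin n) ℝ)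
    (S : Finset (Fin n)) : cols (M * A) S = M * cols A S := by
  ext i j
  simp [cols, Matrix.mul_apply]

lemma cols_zero {m n : ℕ} (S : Finset (Fin n)) : cols (0 : Matrix (Fin m) (Fin n) ℝ) S = 0 := by
  ext i j; simp [cols]

lemma entry_of_cols_eq {m n : ℕ} {M N : Matrix (Fin m) (Fin n) ℝ} {S : Finset (Fin n)}
    (h : cols M S = cols N S) : ∀ i, ∀ j ∈ S, M i j = N i j := fun i j hj =>
  congrFun (congrFun h i) ⟨j, hj⟩

lemma cols_eq_of_entry {m n : ℕ} {M N : Matrix (Fin m) (Fin n) ℝ} {S : Finset (Fin n)}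
    (h : ∀ i, ∀ j ∈ S, M i j = N i j) : cols M S = cols N S := by
  ext i j; exact h i j.1 j.2

lemma projM_transpose {m : ℕ} {k : Type} [Fintype k] [DecidableEq k]
    (C : Matrix (Fin m) k ℝ) : (projM C)ᵀ = projM C := by
  simp only [projM, Matrix.transpose_mul, Matrix.transpose_transpose,
    Matrix.transpose_nonsing_inv]
  rw [Matrix.mul_assoc]

lemma projM_mul_self {m : ℕ} {k : Type} [Fintype k] [DecidableEq k]
    (C : Matrix (Fin m) k ℝ) (h : IsUnit (Cᵀ * C)) : projM C * C = C := by
  rw [projM, Matrix.mul_assoc, Matrix.mul_assoc,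
    Matrix.nonsing_inv_mul _ ((Matrix.isUnit_iff_isUnit_det _).mp h), Matrix.mul_one]

lemma projM_mul_left {m : ℕ} {k : Type} [Fintype k] [DecidableEq k]
    (C : Matrix (Fin m) k ℝ) (M : Matrix (Fin m) (Fin m) ℝ) (h : M * C = C) :
    M * projM C = projM C := by
  rw [projM, ← Matrix.mul_assoc, ← Matrix.mul_assoc, h]

lemma projM_idem {m : ℕ} {k : Type} [Fintype k] [DecidableEq k]
    (C : Matrix (Fin m) k ℝ) (h : IsUnit (Cᵀ * C)) : projM C * projM C = projM C := by
  exact projM_mul_left C (projM C) (projM_mul_self C h)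

lemma projM_mul_right_zero {m : ℕ} {k : Type} [Fintype k] [DecidableEq k]
    (C : Matrix (Fin m) k ℝ) (M : Matrix (Fin m) (Fin m) ℝ) (h : Cᵀ * M = 0) :
    projM C * M = 0 := by
  rw [projM, Matrix.mul_assoc, Matrix.mul_assoc, h, Matrix.mul_zero, Matrix.mul_zero]

lemma frobSq_eq_trace {a b : Type} [Fintype a] [Fintype b] [DecidableEq b]
    (X : Matrix a b ℝ) : frobSq X = Matrix.trace (Xᵀ * X) := by
  simp only [frobSq, Matrix.trace, Matrix.diag, Matrix.mul_apply, Matrix.transpose_apply, sq]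
  exact Finset.sum_comm

lemma frobSq_sub_proj {a : Type} [Fintype a] [DecidableEq a] {b : Type} [Fintype b] [DecidableEq b]
    (Q : Matrix a a ℝ) (F : Matrix a b ℝ) (hsym : Qᵀ = Q) (hidem : Q * Q = Q) :
    frobSq (F - Q * F) = frobSq F - frobSq (Q * F) := by
  rw [frobSq_eq_trace, frobSq_eq_trace, frobSq_eq_trace]
  have h1 : (Q * F)ᵀ * (Q * F) = Fᵀ * (Q * F) := by
    rw [Matrix.transpose_mul, hsym, Matrix.mul_assoc, ← Matrix.mul_assoc Q, hidem]
  have h2 : (Q * F)ᵀ * F = Fᵀ * (Q * F) := by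
    rw [Matrix.transpose_mul, hsym, Matrix.mul_assoc]
  have : (F - Q * F)ᵀ * (F - Q * F) = Fᵀ * F - Fᵀ * (Q * F) := by
    rw [Matrix.transpose_sub, Matrix.sub_mul, Matrix.mul_sub, Matrix.mul_sub, h1, h2]
    abel
  rw [this, Matrix.trace_sub, h1]

theorem stmt14 {m n r : ℕ} (A : Matrix (Fin m) (Fin n) ℝ)
    (Ω : Matrix (Fin n) (Fin r) ℝ) (S P : Finset (Fin n)) (hPS : P ⊂ S)
    (hS : IsUnit ((cols A S)ᵀ * cols A S))
    (hP : IsUnit ((cols A P)ᵀ * cols A P))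
    (hR : IsUnit ((cols (A - projM (cols A P) * A) (S \ P))ᵀ *
      cols (A - projM (cols A P) * A) (S \ P))) :
    frobSq (A * Ω - projM (cols A S) * (A * Ω)) =
      frobSq (A * Ω - projM (cols A P) * (A * Ω)) -
        frobSq (projM (cols (A - projM (cols A P) * A) (S \ P)) *
          (A * Ω - projM (cols A P) * (A * Ω))) := by
  set Q := projM (cols A P) with hQdef
  set E := A - Q * A with hEdef
  set Pi := projM (cols E (S \ P)) with hPidef
  set PS := projM (cols A S) with hPSdef
  -- basic symmetries / idempotency
  have hQsym : Qᵀ = Q := projM_transpose _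
  have hPisym : Piᵀ = Pi := projM_transpose _
  have hPSsym : PSᵀ = PS := projM_transpose _
  have hQC : Q * cols A P = cols A P := projM_mul_self _ hP
  have hQidem : Q * Q = Q := projM_idem _ hP
  have hPiidem : Pi * Pi = Pi := projM_idem _ hR
  -- entrywise: Q fixes columns of A in P
  have hQA : ∀ i, ∀ j ∈ P, (Q * A) i j = A i j := by
    have : cols (Q * A) P = cols A P := by rw [cols_mul]; exact hQC
    exact entry_of_cols_eq this
  -- E vanishes on columns in P
  have hEP : ∀ i, ∀ j ∈ P, E i j = 0 := by
    intro i j hj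
    simp [hEdef, Matrix.sub_apply, hQA i j hj]
  -- Q * E = 0
  have hQE : Q * E = 0 := by
    rw [hEdef, Matrix.mul_sub, ← Matrix.mul_assoc, hQidem, sub_self]
  -- Pi fixes columns of E in S \ P
  have hPiC : Pi * cols E (S \ P) = cols E (S \ P) := projM_mul_self _ hR
  have hPiE : ∀ i, ∀ j ∈ S \ P, (Pi * E) i j = E i j := by
    have : cols (Pi * E) (S \ P) = cols E (S \ P) := by rw [cols_mul]; exact hPiC
    exact entry_of_cols_eq this
  -- Pi * Q = 0 and Q * Pi = 0
  have hCQ : (cols E (S \ P))ᵀ * Q = 0 := by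
    have h1 : Q * cols E (S \ P) = 0 := by
      rw [← cols_mul, hQE, cols_zero]
    calc (cols E (S \ P))ᵀ * Q = (Qᵀ * cols E (S \ P))ᵀ := by
          rw [Matrix.transpose_mul, Matrix.transpose_transpose]
      _ = 0 := by rw [hQsym, h1, Matrix.transpose_zero]
  have hPiQ : Pi * Q = 0 := projM_mul_right_zero _ _ hCQ
  have hQPi : Q * Pi = 0 := by
    calc Q * Pi = (Piᵀ * Qᵀ)ᵀ := by
          rw [Matrix.transpose_mul, Matrix.transpose_transpose, Matrix.transpose_transpose]
      _ = 0 := by rw [hPisym, hQsym, hPiQ, Matrix.transpose_zero]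
  -- Pi * A = Pi * E
  have hPiA : Pi * A = Pi * E := by
    have : A = E + Q * A := by rw [hEdef]; abel
    rw [this, Matrix.mul_add, ← Matrix.mul_assoc, hPiQ, Matrix.zero_mul, add_zero]
  -- PS fixes columns of A in S
  have hPSA : ∀ i, ∀ j ∈ S, (PS * A) i j = A i j := by
    have : cols (PS * A) S = cols A S := by rw [cols_mul]; exact projM_mul_self _ hS
    exact entry_of_cols_eq this
  -- (Q + Pi) * cols A S = cols A S
  have hsum : (Q + Pi) * cols A S = cols A S := by
    rw [← cols_mul]
    apply cols_eq_of_entry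
    intro i j hj
    have hadd : ((Q + Pi) * A) i j = (Q * A) i j + (Pi * E) i j := by
      rw [Matrix.add_mul, Matrix.add_apply, hPiA]
    by_cases hjP : j ∈ P
    · have hz : (Pi * E) i j = 0 := by
        rw [Matrix.mul_apply]
        exact Finset.sum_eq_zero fun k _ => by rw [hEP k j hjP, mul_zero]
      rw [hadd, hz, add_zero, hQA i j hjP]
    · have hjR : j ∈ S \ P := Finset.mem_sdiff.mpr ⟨hj, hjP⟩
      rw [hadd, hPiE i j hjR]
      simp [hEdef, Matrix.sub_apply]
  -- (Q + Pi) * PS = PS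
  have h2 : (Q + Pi) * PS = PS := projM_mul_left _ _ hsum
  -- PS * Q = Q
  have hPSCP : PS * cols A P = cols A P := by
    rw [← cols_mul]
    exact cols_eq_of_entry fun i j hj => hPSA i j (hPS.subset hj)
  have h3 : PS * Q = Q := projM_mul_left _ _ hPSCP
  -- PS * Pi = Pi
  have hPSCR : PS * cols E (S \ P) = cols E (S \ P) := by
    rw [← cols_mul]
    apply cols_eq_of_entry
    intro i j hj
    have hjS : j ∈ S := (Finset.mem_sdiff.mp hj).1
    have : PS * E = PS * A - Q * A := by
      rw [hEdef, Matrix.mul_sub, ← Matrix.mul_assoc, h3]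
    rw [this, Matrix.sub_apply, hPSA i j hjS, hEdef, Matrix.sub_apply]
  have h4 : PS * Pi = Pi := projM_mul_left _ _ hPSCR
  -- PS = Q + Pi
  have h5 : PS = Q + Pi := by
    calc PS = PSᵀ := hPSsym.symm
      _ = ((Q + Pi) * PS)ᵀ := by rw [h2]
      _ = PS * (Q + Pi) := by
          rw [Matrix.transpose_mul, hPSsym, Matrix.transpose_add, hQsym, hPisym]
      _ = Q + Pi := by rw [Matrix.mul_add, h3, h4]
  -- final computation
  set B := A * Ω with hBdef
  set F := B - Q * B with hFdef
  have hPiQB : Pi * (Q * B) = 0 := by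
    rw [← Matrix.mul_assoc, hPiQ, Matrix.zero_mul]
  have hPiB : Pi * B = Pi * F := by
    rw [hFdef, Matrix.mul_sub, hPiQB, sub_zero]
  have hkey : B - PS * B = F - Pi * F := by
    rw [h5, Matrix.add_mul, hFdef, ← hPiB]
    abel
  rw [hkey]
  exact frobSq_sub_proj Pi F hPisym hPiidem
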